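/- Let f : ℝ≥0 → ℝ≥0 be non-increasing with non-decreasing work, let C > 0, γ := critical speed with f(γ) ≤ C, and let T be a finite nonempty set of machines each with unit speed. If γ * f(γ) ≤ (|T| + 1) * C, then f(|T|) ≤ ((|T| + 1) / |T|) * C. -/

import Mathlib

open scoped NNReal

theorem stmt_8 {ι : Type*} (f : ℝ≥0 → ℝ≥0) (hf : Antitone f)
    (hwork : Monotone fun s => s * f s)
    (C : ℝ≥0) (hC : 0 < C)
    (γ : ℕ) (hγ : f γ ≤ C) (hγmin : ∀ q : ℕ, f q ≤ C → γ ≤ q)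
    (T : Finset ι) (hT : T.Nonempty)
    (h : (γ : ℝ≥0) * f γ ≤ ((T.card : ℝ≥0) + 1) * C) :
    f (T.card) ≤ (((T.card : ℝ≥0) + 1) / (T.card : ℝ≥0)) * C := by
  set n := T.card with hn
  have hn1 : 1 ≤ n := hT.card_pos
  have hnpos : (0 : ℝ≥0) < (n : ℝ≥0) := by exact_mod_cast hn1
  have hnne : (n : ℝ≥0) ≠ 0 := hnpos.ne'
  by_cases hcase : γ ≤ n
  · have h1 : f n ≤ C := le_trans (hf (by exact_mod_cast hcase)) hγ
    have h2 : (1 : ℝ≥0) ≤ ((n : ℝ≥0) + 1) / n := by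
      rw [le_div_iff₀ hnpos, one_mul]
      exact le_add_of_nonneg_right zero_le
    calc f n ≤ C := h1
      _ = 1 * C := (one_mul C).symm
      _ ≤ (((n : ℝ≥0) + 1) / n) * C := mul_le_mul_left h2 C
  · push_neg at hcase
    have hle : (n : ℝ≥0) ≤ (γ : ℝ≥0) := by exact_mod_cast hcase.le
    have hw : (n : ℝ≥0) * f n ≤ (γ : ℝ≥0) * f γ := hwork hle
    have : (n : ℝ≥0) * f n ≤ ((n : ℝ≥0) + 1) * C := hw.trans h
    rw [div_mul_eq_mul_div, le_div_iff₀ hnpos, mul_comm]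
    exact this
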